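/- Let G be a simple graph in which every edge lies in a 3-clique, no two distinct 3-cliques of G share two vertices, and G is 2-robustly 3-colourable. Then the monotone 1-in-3 instance C(G) satisfies: (II) no two distinct clauses of C(G) have more than one variable in common; (I) for all variables x, y, z of C(G) (not necessarily distinct) such that {x, y, z} is not a clause of C(G), there is an assignment ν that 1-in-3 satisfies C(G) for which at least two of the three entries of the triple (ν(x), ν(y), ν(z)) are true; (IV) for all variables w, x, y, z of C(G) (not necessarily distinct), there is an assignment ν that 1-in-3 satisfies C(G) for which at least two of the four entries of (ν(w), ν(x), ν(y), ν(z)) are true. -/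
import Mathlib


/-- Exactly one of three Boolean values is `true`. -/
def oneOf3 (a b c : Bool) : Prop :=
  (a = true ∧ b = false ∧ c = false) ∨ (a = false ∧ b = true ∧ c = false) ∨
  (a = false ∧ b = false ∧ c = true)

/-- `ν` 1-in-3 satisfies the monotone 1-in-3 instance `C(G)`. -/
def CSat {V : Type} (G : SimpleGraph V) (ν : V × Fin 3 → Bool) : Prop :=
  (∀ i : V, oneOf3 (ν (i, 0)) (ν (i, 1)) (ν (i, 2))) ∧
  (∀ i₁ i₂ i₃ : V, G.Adj i₁ i₂ → G.Adj i₁ i₃ → G.Adj i₂ i₃ →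
    ∀ j : Fin 3, oneOf3 (ν (i₁, j)) (ν (i₂, j)) (ν (i₃, j)))

/-- The clauses of the instance `C(G)`, as finite sets of variables: a vertex clause
`{(i,0), (i,1), (i,2)}` for each vertex `i`, and a clique clause `{(i₁,j), (i₂,j), (i₃,j)}`
for each 3-clique `{i₁, i₂, i₃}` of `G` and colour `j`. -/
def IsCClause {V : Type} [DecidableEq V] (G : SimpleGraph V)
    (s : Finset (V × Fin 3)) : Prop :=
  (∃ i : V, s = {(i, 0), (i, 1), (i, 2)}) ∨
  (∃ (i₁ i₂ i₃ : V) (j : Fin 3), G.Adj i₁ i₂ ∧ G.Adj i₁ i₃ ∧ G.Adj i₂ i₃ ∧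
    s = {(i₁, j), (i₂, j), (i₃, j)})

/-- Compatibility of two variables: they can simultaneously be made true. -/
def Compat {V : Type} (G : SimpleGraph V) (p q : V × Fin 3) : Prop :=
  (p.1 = q.1 → p.2 = q.2) ∧ (G.Adj p.1 q.1 → p.2 ≠ q.2)

lemma compat_symm {V : Type} (G : SimpleGraph V) {p q : V × Fin 3}
    (h : Compat G p q) : Compat G q p :=
  ⟨fun e => (h.1 e.symm).symm, fun a e => h.2 a.symm e.symm⟩

lemma notCompat {V : Type} (G : SimpleGraph V) {p q : V × Fin 3}
    (h : ¬ Compat G p q) :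
    (p.1 = q.1 ∧ p.2 ≠ q.2) ∨ (G.Adj p.1 q.1 ∧ p.2 = q.2) := by
  unfold Compat at h
  by_cases h1 : p.1 = q.1
  · by_cases h2 : p.2 = q.2
    · exact absurd ⟨fun _ => h2, fun a _ => (G.irrefl (h1 ▸ a))⟩ h
    · exact Or.inl ⟨h1, h2⟩
  · by_cases h2 : p.2 = q.2
    · by_cases h3 : G.Adj p.1 q.1
      · exact Or.inr ⟨h3, h2⟩
      · exact absurd ⟨fun e => absurd e h1, fun a => absurd a h3⟩ h
    · exact absurd ⟨fun e => absurd e h1, fun _ => h2⟩ h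

lemma notCompat_ne_colour {V : Type} (G : SimpleGraph V) {p q : V × Fin 3}
    (h : ¬ Compat G p q) (hc : p.2 ≠ q.2) : p.1 = q.1 := by
  rcases notCompat G h with ⟨h1, _⟩ | ⟨_, h2⟩
  · exact h1
  · exact absurd h2 hc

lemma notCompat_eq_colour {V : Type} (G : SimpleGraph V) {p q : V × Fin 3}
    (h : ¬ Compat G p q) (hc : p.2 = q.2) : G.Adj p.1 q.1 := by
  rcases notCompat G h with ⟨_, h2⟩ | ⟨h1, _⟩
  · exact absurd hc h2
  · exact h1

lemma notCompat_eq_vertex {V : Type} (G : SimpleGraph V) {p q : V × Fin 3}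
    (h : ¬ Compat G p q) (hv : p.1 = q.1) : p.2 ≠ q.2 := by
  rcases notCompat G h with ⟨_, h2⟩ | ⟨h1, _⟩
  · exact h2
  · exact absurd (hv ▸ h1) (G.irrefl)

set_option synthInstance.maxSize 1000 in
lemma oneOf3_vertex : ∀ a : Fin 3,
    oneOf3 (decide (a = 0)) (decide (a = 1)) (decide (a = 2)) := by
  unfold oneOf3; decide

set_option synthInstance.maxSize 1000 in
lemma oneOf3_clique : ∀ a b c j : Fin 3, a ≠ b → a ≠ c → b ≠ c →
    oneOf3 (decide (a = j)) (decide (b = j)) (decide (c = j)) := by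
  unfold oneOf3; decide

set_option synthInstance.maxSize 1000 in
lemma fin3_no4 : ∀ a b c d : Fin 3, a ≠ b → a ≠ c → a ≠ d → b ≠ c → b ≠ d → c ≠ d →
    False := by decide

set_option synthInstance.maxSize 1000 in
lemma fin3_triple : ∀ a b c : Fin 3, a ≠ b → a ≠ c → b ≠ c →
    ({a, b, c} : Finset (Fin 3)) = {0, 1, 2} := by decide

lemma colouring_sat {V : Type} (G : SimpleGraph V) (c : V → Fin 3)
    (hc : ∀ x y : V, G.Adj x y → c x ≠ c y) :
    CSat G (fun p => decide (c p.1 = p.2)) := by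
  constructor
  · intro i
    exact oneOf3_vertex (c i)
  · intro i₁ i₂ i₃ h12 h13 h23 j
    exact oneOf3_clique _ _ _ j (hc _ _ h12) (hc _ _ h13) (hc _ _ h23)

lemma pair_sat {V : Type} (G : SimpleGraph V)
    (hrob : ∀ u v : V, ∀ cu cv : Fin 3, (u = v → cu = cv) → (G.Adj u v → cu ≠ cv) →
      ∃ c : V → Fin 3, (∀ x y : V, G.Adj x y → c x ≠ c y) ∧ c u = cu ∧ c v = cv)
    (p q : V × Fin 3) (h : Compat G p q) :
    ∃ ν : V × Fin 3 → Bool, CSat G ν ∧ ν p = true ∧ ν q = true := by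
  obtain ⟨c, hc, hp, hq⟩ := hrob p.1 q.1 p.2 q.2 h.1 h.2
  exact ⟨fun r => decide (c r.1 = r.2), colouring_sat G c hc,
    by simp [hp], by simp [hq]⟩

lemma no_K4 {V : Type} [DecidableEq V] (G : SimpleGraph V)
    (hcliq : ∀ s t : Finset V, G.IsNClique 3 s → G.IsNClique 3 t → s ≠ t →
      (s ∩ t).card ≤ 1)
    {a b c d : V} (hab : G.Adj a b) (hac : G.Adj a c) (had : G.Adj a d)
    (hbc : G.Adj b c) (hbd : G.Adj b d) (hcd : G.Adj c d) : False := by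
  have hs : G.IsNClique 3 ({a, b, c} : Finset V) :=
    SimpleGraph.is3Clique_triple_iff.mpr ⟨hab, hac, hbc⟩
  have ht : G.IsNClique 3 ({a, b, d} : Finset V) :=
    SimpleGraph.is3Clique_triple_iff.mpr ⟨hab, had, hbd⟩
  have hne : ({a, b, c} : Finset V) ≠ {a, b, d} := by
    intro h
    have : c ∈ ({a, b, d} : Finset V) := by
      rw [← h]; simp
    simp only [Finset.mem_insert, Finset.mem_singleton] at this
    rcases this with h' | h' | h'
    · exact hac.ne h'.symm
    · exact hbc.ne h'.symm
    · exact hcd.ne h'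
  have hsub : ({a, b} : Finset V) ⊆ ({a, b, c} : Finset V) ∩ {a, b, d} := by
    intro x hx
    simp only [Finset.mem_insert, Finset.mem_singleton] at hx
    rcases hx with rfl | rfl <;> simp
  have h2 : ({a, b} : Finset V).card = 2 := by
    rw [Finset.card_insert_of_notMem (by simpa using hab.ne), Finset.card_singleton]
  have := (h2 ▸ Finset.card_le_card hsub).trans (hcliq _ _ hs ht hne)
  omega

/-- Among any four variables, some pair (in distinct positions) is compatible. -/
lemma four_compat {V : Type} [DecidableEq V] (G : SimpleGraph V)
    (hcliq : ∀ s t : Finset V, G.IsNClique 3 s → G.IsNClique 3 t → s ≠ t →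
      (s ∩ t).card ≤ 1)
    (w x y z : V × Fin 3) :
    Compat G w x ∨ Compat G w y ∨ Compat G w z ∨ Compat G x y ∨ Compat G x z ∨
      Compat G y z := by
  by_contra h
  push_neg at h
  obtain ⟨hwx, hwy, hwz, hxy, hxz, hyz⟩ := h
  by_cases hc : w.2 = x.2 ∧ w.2 = y.2 ∧ w.2 = z.2
  · obtain ⟨h1, h2, h3⟩ := hc
    exact no_K4 G hcliq (notCompat_eq_colour G hwx h1) (notCompat_eq_colour G hwy h2)
      (notCompat_eq_colour G hwz h3) (notCompat_eq_colour G hxy (h1 ▸ h2))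
      (notCompat_eq_colour G hxz (h1 ▸ h3)) (notCompat_eq_colour G hyz (h2 ▸ h3))
  · -- some pair of colours differs; derive all vertices equal
    have key : ∀ a b c d : V × Fin 3, a.2 ≠ b.2 → ¬ Compat G a b → ¬ Compat G a c →
        ¬ Compat G a d → ¬ Compat G b c → ¬ Compat G b d → ¬ Compat G c d → False := by
      intro a b c d hne hab hac had hbc hbd hcd
      have vab : a.1 = b.1 := notCompat_ne_colour G hab hne
      have vc : c.1 = a.1 := by
        by_cases h' : c.2 = a.2
        · have : b.2 ≠ c.2 := fun e => hne ((e.trans h').symm)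
          exact ((notCompat_ne_colour G hbc this).symm).trans vab.symm
        · exact (notCompat_ne_colour G hac (fun e => h' e.symm)).symm
      have vd : d.1 = a.1 := by
        by_cases h' : d.2 = a.2
        · have : b.2 ≠ d.2 := fun e => hne ((e.trans h').symm)
          exact ((notCompat_ne_colour G hbd this).symm).trans vab.symm
        · exact (notCompat_ne_colour G had (fun e => h' e.symm)).symm
      exact fin3_no4 a.2 b.2 c.2 d.2 hne
        (notCompat_eq_vertex G hac vc.symm)
        (notCompat_eq_vertex G had vd.symm)
        (notCompat_eq_vertex G hbc (vab.symm.trans vc.symm))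
        (notCompat_eq_vertex G hbd (vab.symm.trans vd.symm))
        (notCompat_eq_vertex G hcd (vc.trans vd.symm))
    push_neg at hc
    by_cases h1 : w.2 = x.2
    · by_cases h2 : w.2 = y.2
      · exact key w z x y (hc h1 h2) hwz hwx hwy
          (fun h' => hxz (compat_symm G h')) (fun h' => hyz (compat_symm G h')) hxy
      · exact key w y x z h2 hwy hwx hwz
          (fun h' => hxy (compat_symm G h')) hyz hxz
    · exact key w x y z h1 hwx hwy hwz hxy hxz hyz

/-- Among any three variables not forming a clause, some pair is compatible. -/
lemma three_compat {V : Type} [DecidableEq V] (G : SimpleGraph V)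
    (w x y : V × Fin 3) (h : ¬ IsCClause G {w, x, y}) :
    Compat G w x ∨ Compat G w y ∨ Compat G x y := by
  by_contra hcon
  push_neg at hcon
  obtain ⟨hwx, hwy, hxy⟩ := hcon
  apply h
  rcases notCompat G hwx with ⟨v1, c1⟩ | ⟨a1, e1⟩
  · -- w.1 = x.1, w.2 ≠ x.2
    rcases notCompat G hwy with ⟨v2, c2⟩ | ⟨a2, e2⟩
    · -- all same vertex
      have v3 : x.1 = y.1 := v1.symm.trans v2
      have c3 : x.2 ≠ y.2 := notCompat_eq_vertex G hxy v3
      left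
      refine ⟨w.1, ?_⟩
      have hw : w = (w.1, w.2) := rfl
      have hx : x = (w.1, x.2) := by rw [v1]
      have hy : y = (w.1, y.2) := by rw [v2]
      rw [hw, hx, hy]
      have himg : ∀ a b c : Fin 3, ({(w.1, a), (w.1, b), (w.1, c)} : Finset (V × Fin 3))
          = ({a, b, c} : Finset (Fin 3)).image (fun k => (w.1, k)) := by
        intro a b c
        simp [Finset.image_insert]
      rw [himg, himg, fin3_triple w.2 x.2 y.2 c1 c2 c3]
    · -- wy adjacent same colour: then x vs y: x.2 ≠ y.2=w.2... derive contradiction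
      rcases notCompat G hxy with ⟨v3, _⟩ | ⟨_, e3⟩
      · exact (G.irrefl ((v1.trans v3) ▸ a2)).elim
      · exact (c1 (e2.trans e3.symm)).elim
  · -- wx adjacent, same colour
    rcases notCompat G hwy with ⟨v2, c2⟩ | ⟨a2, e2⟩
    · rcases notCompat G hxy with ⟨v3, _⟩ | ⟨_, e3⟩
      · exact (G.irrefl ((v3.trans v2.symm) ▸ a1)).elim
      · exact (c2 (e1.trans e3)).elim
    · rcases notCompat G hxy with ⟨v3, c3⟩ | ⟨a3, e3⟩
      · exact (c3 (e1.symm.trans e2)).elim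
      · right
        refine ⟨w.1, x.1, y.1, w.2, a1, a2, a3, ?_⟩
        have hw : w = (w.1, w.2) := rfl
        have hx : x = (x.1, w.2) := by rw [e1]
        have hy : y = (y.1, w.2) := by rw [e1, e3]
        rw [hw, hx, hy]

/-- Let `G` be a simple graph in which every edge lies in a 3-clique, no
two distinct 3-cliques share two vertices, and which is 2-robustly 3-colourable. Then:
(II) distinct clauses of `C(G)` share at most one variable; (I) for any triple of
variables not forming a clause there is a 1-in-3 satisfying assignment making at least two
of its entries true; (IV) for any quadruple of variables there is a 1-in-3 satisfying
assignment making at least two of its entries true. -/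
theorem stmt_15 {V : Type} [DecidableEq V] (G : SimpleGraph V)
    (htri : ∀ u v : V, G.Adj u v → ∃ w : V, G.Adj u w ∧ G.Adj v w)
    (hcliq : ∀ s t : Finset V, G.IsNClique 3 s → G.IsNClique 3 t → s ≠ t →
      (s ∩ t).card ≤ 1)
    (hrob : ∀ u v : V, ∀ cu cv : Fin 3, (u = v → cu = cv) → (G.Adj u v → cu ≠ cv) →
      ∃ c : V → Fin 3, (∀ x y : V, G.Adj x y → c x ≠ c y) ∧ c u = cu ∧ c v = cv) :
    -- (II)
    (∀ s t : Finset (V × Fin 3), IsCClause G s → IsCClause G t → s ≠ t →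
      (s ∩ t).card ≤ 1) ∧
    -- (I)
    (∀ x y z : V × Fin 3, ¬ IsCClause G {x, y, z} →
      ∃ ν : V × Fin 3 → Bool, CSat G ν ∧
        2 ≤ (ν x).toNat + (ν y).toNat + (ν z).toNat) ∧
    -- (IV)
    (∀ w x y z : V × Fin 3,
      ∃ ν : V × Fin 3 → Bool, CSat G ν ∧
        2 ≤ (ν w).toNat + (ν x).toNat + (ν y).toNat + (ν z).toNat) := by
  refine ⟨?_, ?_, ?_⟩
  · -- (II)
    intro s t hs ht hst
    rcases hs with ⟨i, rfl⟩ | ⟨i₁, i₂, i₃, j, h12, h13, h23, rfl⟩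
    · rcases ht with ⟨i', rfl⟩ | ⟨i₁', i₂', i₃', j', h12', h13', h23', rfl⟩
      · -- vertex vs vertex
        have hii : i ≠ i' := fun h => hst (by rw [h])
        rw [Finset.card_le_one]
        intro a ha b hb
        simp only [Finset.mem_inter, Finset.mem_insert, Finset.mem_singleton] at ha hb
        exfalso
        rcases ha.1 with rfl | rfl | rfl <;>
          rcases ha.2 with h' | h' | h' <;> exact hii (congrArg Prod.fst h')
      · -- vertex vs clique
        rw [Finset.card_le_one]
        intro a ha b hb
        simp only [Finset.mem_inter, Finset.mem_insert, Finset.mem_singleton] at ha hb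
        have ha1 : a.1 = i := by rcases ha.1 with rfl | rfl | rfl <;> rfl
        have ha2 : a.2 = j' := by rcases ha.2 with rfl | rfl | rfl <;> rfl
        have hb1 : b.1 = i := by rcases hb.1 with rfl | rfl | rfl <;> rfl
        have hb2 : b.2 = j' := by rcases hb.2 with rfl | rfl | rfl <;> rfl
        exact Prod.ext (ha1.trans hb1.symm) (ha2.trans hb2.symm)
    · rcases ht with ⟨i', rfl⟩ | ⟨i₁', i₂', i₃', j', h12', h13', h23', rfl⟩
      · -- clique vs vertex
        rw [Finset.card_le_one]
        intro a ha b hb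
        simp only [Finset.mem_inter, Finset.mem_insert, Finset.mem_singleton] at ha hb
        have ha1 : a.1 = i' := by rcases ha.2 with rfl | rfl | rfl <;> rfl
        have ha2 : a.2 = j := by rcases ha.1 with rfl | rfl | rfl <;> rfl
        have hb1 : b.1 = i' := by rcases hb.2 with rfl | rfl | rfl <;> rfl
        have hb2 : b.2 = j := by rcases hb.1 with rfl | rfl | rfl <;> rfl
        exact Prod.ext (ha1.trans hb1.symm) (ha2.trans hb2.symm)
      · -- clique vs clique
        by_cases hj : j = j'
        · subst hj
          have himg : ∀ a b c : V, ({(a, j), (b, j), (c, j)} : Finset (V × Fin 3))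
              = ({a, b, c} : Finset V).image (fun v => (v, j)) := by
            intro a b c; simp [Finset.image_insert]
          rw [himg, himg] at hst ⊢
          have hinj : Function.Injective (fun v : V => (v, j)) := by
            intro a b h'; exact congrArg Prod.fst h'
          rw [← Finset.image_inter _ _ hinj, Finset.card_image_of_injective _ hinj]
          apply hcliq
          · exact SimpleGraph.is3Clique_triple_iff.mpr ⟨h12, h13, h23⟩
          · exact SimpleGraph.is3Clique_triple_iff.mpr ⟨h12', h13', h23'⟩
          · intro h'; exact hst (by rw [h'])
        · rw [Finset.card_le_one]
          intro a ha b hb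
          simp only [Finset.mem_inter, Finset.mem_insert, Finset.mem_singleton] at ha hb
          exfalso
          have ha2 : a.2 = j := by rcases ha.1 with rfl | rfl | rfl <;> rfl
          have ha2' : a.2 = j' := by rcases ha.2 with rfl | rfl | rfl <;> rfl
          exact hj (ha2 ▸ ha2')
  · -- (I)
    intro x y z hcl
    rcases three_compat G x y z hcl with h | h | h
    · obtain ⟨ν, hν, h1, h2⟩ := pair_sat G hrob x y h
      exact ⟨ν, hν, by rw [h1, h2]; simp⟩
    · obtain ⟨ν, hν, h1, h2⟩ := pair_sat G hrob x z h
      exact ⟨ν, hν, by rw [h1, h2]; simp; try omega⟩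
    · obtain ⟨ν, hν, h1, h2⟩ := pair_sat G hrob y z h
      exact ⟨ν, hν, by rw [h1, h2]; simp; try omega⟩
  · -- (IV)
    intro w x y z
    rcases four_compat G hcliq w x y z with h | h | h | h | h | h
    · obtain ⟨ν, hν, h1, h2⟩ := pair_sat G hrob w x h
      exact ⟨ν, hν, by rw [h1, h2]; simp; try omega⟩
    · obtain ⟨ν, hν, h1, h2⟩ := pair_sat G hrob w y h
      exact ⟨ν, hν, by rw [h1, h2]; simp; try omega⟩
    · obtain ⟨ν, hν, h1, h2⟩ := pair_sat G hrob w z h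
      exact ⟨ν, hν, by rw [h1, h2]; simp; try omega⟩
    · obtain ⟨ν, hν, h1, h2⟩ := pair_sat G hrob x y h
      exact ⟨ν, hν, by rw [h1, h2]; simp; try omega⟩
    · obtain ⟨ν, hν, h1, h2⟩ := pair_sat G hrob x z h
      exact ⟨ν, hν, by rw [h1, h2]; simp; try omega⟩
    · obtain ⟨ν, hν, h1, h2⟩ := pair_sat G hrob y z h
      exact ⟨ν, hν, by rw [h1, h2]; simp; try omega⟩
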